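/- The trust update is compatible with operadic composition: for μ ∈ Δ⁺_N, families ν_i ∈ Δ⁺_{M_i}, guesses γ_{i,j} ∈ Bet_X, and any outcome x ∈ X, the equation γ(x) * (μ ∘ ν) = ((ν·γ)(x) * μ) ∘ (i ↦ γ_i(x) * ν_i) holds; componentwise, γ_{i,j}(x)μ_iν_{i,j} / ∑_{i',j'} γ_{i',j'}(x)μ_{i'}ν_{i',j'} = [ (∑_{j'} ν_{i,j'}γ_{i,j'}(x))μ_i / ∑_{i'}(∑_{j'} ν_{i',j'}γ_{i',j'}(x))μ_{i'} ] · [ γ_{i,j}(x)ν_{i,j} / ∑_{j'} ν_{i,j'}γ_{i,j'}(x) ]. -/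
import Mathlib


def IsDist {K : Type} [Fintype K] (μ : K → ℝ) : Prop :=
  (∀ i, 0 < μ i ∧ μ i ≤ 1) ∧ ∑ i, μ i = 1

/-- Compatibility of the trust update with operadic composition:
γ(x) * (μ ∘ ν) = ((ν·γ)(x) * μ) ∘ (i ↦ γ_i(x) * ν_i), componentwise. -/
theorem stmt_6 {X : Type} [Fintype X] [Nonempty X] {N : Type} [Fintype N] [Nonempty N]
    {M : N → Type} [∀ i, Fintype (M i)] [∀ i, Nonempty (M i)]
    (μ : N → ℝ) (ν : ∀ i, M i → ℝ) (γ : ∀ i, M i → X → ℝ) (x : X)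
    (hμ : IsDist μ) (hν : ∀ i, IsDist (ν i)) (hγ : ∀ i j, IsDist (γ i j)) :
    ∀ (i : N) (j : M i),
      γ i j x * (μ i * ν i j) / (∑ s : Σ i', M i', γ s.1 s.2 x * (μ s.1 * ν s.1 s.2)) =
        ((∑ j', ν i j' * γ i j' x) * μ i /
            (∑ i', (∑ j', ν i' j' * γ i' j' x) * μ i')) *
          (γ i j x * ν i j / (∑ j', ν i j' * γ i j' x)) := by
  intro i j
  have hSpos : ∀ i', 0 < ∑ j', ν i' j' * γ i' j' x := fun i' =>
    Finset.sum_pos (fun j' _ => mul_pos ((hν i').1 j').1 ((hγ i' j').1 x).1)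
      Finset.univ_nonempty
  have hTpos : 0 < ∑ i', (∑ j', ν i' j' * γ i' j' x) * μ i' :=
    Finset.sum_pos (fun i' _ => mul_pos (hSpos i') (hμ.1 i').1) Finset.univ_nonempty
  have hsum : (∑ s : Σ i', M i', γ s.1 s.2 x * (μ s.1 * ν s.1 s.2)) =
      ∑ i', (∑ j', ν i' j' * γ i' j' x) * μ i' := by
    rw [← Finset.univ_sigma_univ, Finset.sum_sigma]
    congr 1; funext i'
    rw [Finset.sum_mul]
    congr 1; funext j'
    ring
  rw [hsum, div_mul_div_comm,
    div_eq_div_iff hTpos.ne' (mul_pos hTpos (hSpos i)).ne']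
  ring
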